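/- Let K be a field of characteristic zero, a1(x) ∈ K[x] with deg a1(x) ≥ 1, and a0 ∈ K* a nonzero constant. For the K-derivation D = y∂x + (a1(x)y + a0)∂y of K[x,y] (so D(x) = y, D(y) = a1(x)y + a0), the polynomial x does not belong to the image D(K[x,y]); that is, there is no G ∈ K[x,y] with y·G_x + (a1(x)y + a0)·G_y = x. -/
import Mathlib
open Polynomial MvPolynomial

set_option linter.unusedSectionVars false
set_option maxHeartbeats 1000000
section Aux
variable {K : Type*} [Field K] [CharZero K]

noncomputable def phi (K : Type*) [Field K] : MvPolynomial (Fin 2) K →ₐ[K] Polynomial (Polynomial K) :=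
  MvPolynomial.aeval ![Polynomial.C Polynomial.X, Polynomial.X]

lemma phi_X0 : phi K (X 0) = Polynomial.C Polynomial.X := by simp [phi]
lemma phi_X1 : phi K (X 1) = Polynomial.X := by simp [phi]

lemma phi_pderiv1 (p : MvPolynomial (Fin 2) K) :
    phi K (pderiv 1 p) = derivative (phi K p) := by
  induction p using MvPolynomial.induction_on with
  | C a => simp [phi]
  | add p q hp hq => simp [hp, hq]
  | mul_X p i hp =>
    rw [Derivation.leibniz]
    fin_cases i
    · simp [phi_X0, hp, smul_eq_mul, pderiv_X_of_ne (by decide : (0:Fin 2) ≠ 1)]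
      ring
    · simp [phi_X1, hp, smul_eq_mul, pderiv_X_self]
      ring

lemma phi_pderiv0 (p : MvPolynomial (Fin 2) K) (k : ℕ) :
    (phi K (pderiv 0 p)).coeff k = derivative ((phi K p).coeff k) := by
  induction p using MvPolynomial.induction_on generalizing k with
  | C a => simp [phi, Polynomial.coeff_C, apply_ite derivative]
  | add p q hp hq => simp [hp, hq]
  | mul_X p i hp =>
    rw [Derivation.leibniz]
    fin_cases i <;>
      simp only [Fin.mk_zero, Fin.mk_one, Fin.isValue, smul_eq_mul, map_add, map_mul,
        Polynomial.coeff_add]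
    · rw [pderiv_X_self]
      simp only [map_one, mul_one, phi_X0, Polynomial.coeff_C_mul, hp,
        Polynomial.coeff_mul_C, Polynomial.derivative_mul, Polynomial.derivative_X, mul_one]
      ring
    · rw [pderiv_X_of_ne (by decide : (1:Fin 2) ≠ 0)]
      simp only [map_zero, mul_zero, Polynomial.coeff_zero, zero_add, phi_X1]
      rcases k with _ | k
      · simp
      · rw [Polynomial.coeff_X_mul, hp, Polynomial.coeff_mul_X]

end Aux

theorem stmt_3 (K : Type*) [Field K] [CharZero K] (a1 : Polynomial K)
    (ha1 : 1 ≤ a1.degree) (a0 : K) (ha0 : a0 ≠ 0)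
    (D : Derivation K (MvPolynomial (Fin 2) K) (MvPolynomial (Fin 2) K))
    (hDx : D (MvPolynomial.X 0) = MvPolynomial.X 1)
    (hDy : D (MvPolynomial.X 1) =
      Polynomial.aeval (MvPolynomial.X 0) a1 * MvPolynomial.X 1 + MvPolynomial.C a0) :
    ¬ ∃ G : MvPolynomial (Fin 2) K, D G = MvPolynomial.X 0 := by
  rintro ⟨G, hG⟩
  set q : MvPolynomial (Fin 2) K := Polynomial.aeval (MvPolynomial.X 0) a1 * MvPolynomial.X 1 + MvPolynomial.C a0 with hq
  have hD : D = (MvPolynomial.X 1 : MvPolynomial (Fin 2) K) • (pderiv 0) + q • (pderiv 1) := by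
    apply MvPolynomial.derivation_ext
    intro i
    fin_cases i <;>
      simp only [Fin.mk_zero, Fin.mk_one, Fin.isValue, Derivation.add_apply,
        Derivation.smul_apply, smul_eq_mul]
    · rw [hDx, pderiv_X_self, pderiv_X_of_ne (by decide : (0:Fin 2) ≠ 1)]; ring
    · rw [hDy, pderiv_X_of_ne (by decide : (1:Fin 2) ≠ 0), pderiv_X_self]; ring
  rw [hD] at hG
  simp only [Derivation.add_apply, Derivation.smul_apply, smul_eq_mul] at hG
  -- apply phi
  have hphi := congrArg (phi K) hG
  simp only [map_add, map_mul, phi_X0, phi_X1, hq] at hphi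
  have haeval : phi K (Polynomial.aeval (MvPolynomial.X 0) a1) = Polynomial.C a1 := by
    rw [← Polynomial.aeval_algHom_apply, phi_X0,
      show (Polynomial.C Polynomial.X : Polynomial (Polynomial K)) = Polynomial.CAlgHom (R := K) Polynomial.X from rfl,
      Polynomial.aeval_algHom_apply, Polynomial.aeval_X_left_apply]
    rfl
  rw [haeval, phi_pderiv1, show phi K (MvPolynomial.C a0) = Polynomial.C (Polynomial.C a0) by simp [phi]] at hphi
  set P := phi K G with hPdef
  have hE0 : Polynomial.C a0 * P.coeff 1 = Polynomial.X := by
    have h := congrArg (fun p => Polynomial.coeff p 0) hphi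
    simp only [Polynomial.coeff_add, Polynomial.mul_coeff_zero, Polynomial.coeff_X_zero,
      Polynomial.coeff_C_zero, Polynomial.coeff_derivative, zero_mul, mul_zero, add_mul,
      Polynomial.coeff_C, zero_add, add_zero] at h
    simpa using h
  have hE : ∀ k : ℕ, derivative (P.coeff k)
      + a1 * (P.coeff (k+1) * ((k:Polynomial K)+1))
      + Polynomial.C a0 * (P.coeff (k+2) * ((k:Polynomial K)+2)) = 0 := by
    intro k
    have h := congrArg (fun p => Polynomial.coeff p (k+1)) hphi
    simp only [Polynomial.coeff_add, add_mul, mul_assoc, Polynomial.coeff_C_mul,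
      Polynomial.coeff_X_mul, Polynomial.coeff_derivative, phi_pderiv0, Polynomial.coeff_C] at h
    rw [if_neg (by omega), ← hPdef] at h
    push_cast at h
    linear_combination h
  -- basic facts
  have ha1ne : a1 ≠ 0 := fun h => by simp [h] at ha1
  have hdpos : 0 < a1.natDegree := by
    rw [Polynomial.natDegree_pos_iff_degree_pos]; exact lt_of_lt_of_le zero_lt_one ha1
  set d := a1.natDegree with hd
  have hg1 : P.coeff 1 ≠ 0 := by
    intro h; rw [h, mul_zero] at hE0; exact Polynomial.X_ne_zero hE0.symm
  have hPne : P ≠ 0 := fun h => hg1 (by simp [h])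
  set n := P.natDegree with hn
  have hn1 : 1 ≤ n := Polynomial.le_natDegree_of_ne_zero hg1
  -- the key degree claim
  have key : ∀ j, j ≤ n → (P.coeff (n - j)).degree = ((j * (d + 1) : ℕ) : WithBot ℕ) := by
    intro j
    induction j using Nat.strong_induction_on with
    | _ j IH =>
      match j with
      | 0 =>
        intro _
        have h0 := hE n
        have z1 : P.coeff (n+1) = 0 := Polynomial.coeff_eq_zero_of_natDegree_lt (by omega)
        have z2 : P.coeff (n+2) = 0 := Polynomial.coeff_eq_zero_of_natDegree_lt (by omega)
        rw [z1, z2] at h0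
        simp only [zero_mul, mul_zero, add_zero, zero_add] at h0
        have hd0 : (P.coeff n).natDegree = 0 :=
          Polynomial.natDegree_eq_zero_of_derivative_eq_zero h0
        have hne : P.coeff n ≠ 0 := fun h => hPne (Polynomial.leadingCoeff_eq_zero.mp h)
        rw [Nat.sub_zero, Polynomial.degree_eq_natDegree hne, hd0, zero_mul]
      | (m+1) =>
        intro hle
        have h0 := hE (n - (m+1))
        have i1 : n - (m+1) + 1 = n - m := by omega
        have i2 : n - (m+1) + 2 = n - m + 1 := by omega
        rw [i1, i2] at h0
        have hc1 : ((n - (m+1) : ℕ) : Polynomial K) + 1 = ((n - m : ℕ) : Polynomial K) := by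
          rw [← i1]; push_cast; ring
        have hc2 : ((n - (m+1) : ℕ) : Polynomial K) + 2 = ((n - m + 1 : ℕ) : Polynomial K) := by
          rw [← i2]; push_cast; ring
        rw [hc1, hc2] at h0
        have hIH : (P.coeff (n - m)).degree = ((m * (d+1) : ℕ) : WithBot ℕ) :=
          IH m (by omega) (by omega)
        have hdegnat : ∀ k : ℕ, k ≠ 0 → ((k : Polynomial K)).degree = 0 := by
          intro k hk
          rw [← Polynomial.C_eq_natCast, Polynomial.degree_C (Nat.cast_ne_zero.mpr hk)]
        have ht1 : (a1 * (P.coeff (n - m) * ((n - m : ℕ) : Polynomial K))).degree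
            = ((d + m * (d+1) : ℕ) : WithBot ℕ) := by
          rw [Polynomial.degree_mul, Polynomial.degree_mul, hIH, hdegnat _ (by omega),
            Polynomial.degree_eq_natDegree ha1ne, add_zero, ← Nat.cast_add]
        have ht2 : (Polynomial.C a0 * (P.coeff (n - m + 1) * ((n - m + 1 : ℕ) : Polynomial K))).degree
            < ((d + m * (d+1) : ℕ) : WithBot ℕ) := by
          match m with
          | 0 =>
            rw [Nat.sub_zero, Polynomial.coeff_eq_zero_of_natDegree_lt (by omega), zero_mul,
              mul_zero, Polynomial.degree_zero, Nat.cast_withBot]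
            exact WithBot.bot_lt_coe _
          | (l+1) =>
            have i3 : n - (l+1) + 1 = n - l := by omega
            rw [i3, Polynomial.degree_mul, Polynomial.degree_mul,
              IH l (by omega) (by omega), hdegnat _ (by omega),
              Polynomial.degree_C ha0, add_zero, zero_add]
            exact_mod_cast show l * (d+1) < d + (l+1) * (d+1) by nlinarith [hdpos]
        have hder : derivative (P.coeff (n - (m+1)))
            = -(a1 * (P.coeff (n - m) * ((n - m : ℕ) : Polynomial K))
              + Polynomial.C a0 * (P.coeff (n - m + 1) * ((n - m + 1 : ℕ) : Polynomial K))) := by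
          linear_combination h0
        have hdeg : (derivative (P.coeff (n - (m+1)))).degree = ((d + m * (d+1) : ℕ) : WithBot ℕ) := by
          rw [hder, Polynomial.degree_neg,
            Polynomial.degree_add_eq_left_of_degree_lt (by rw [ht1]; exact ht2), ht1]
        have hdne : derivative (P.coeff (n - (m+1))) ≠ 0 := by
          intro h; rw [h, Polynomial.degree_zero] at hdeg
          exact (WithBot.bot_ne_coe) hdeg
        have hppos : 0 < (P.coeff (n - (m+1))).natDegree := by
          by_contra h
          push_neg at h
          have h0 : (P.coeff (n - (m+1))).natDegree = 0 := by omega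
          obtain ⟨c, hc⟩ := Polynomial.natDegree_eq_zero.mp h0
          rw [← hc] at hdne
          simp at hdne
        have hdd := Polynomial.degree_derivative_eq _ hppos
        rw [hdeg] at hdd
        have h' : (P.coeff (n - (m+1))).natDegree - 1 = d + m * (d+1) := by
          exact_mod_cast hdd.symm
        have hnd : (P.coeff (n - (m+1))).natDegree = d + m * (d+1) + 1 := by omega
        have hpne : P.coeff (n - (m+1)) ≠ 0 := fun h => hdne (by rw [h]; simp)
        rw [Polynomial.degree_eq_natDegree hpne, hnd]
        norm_cast
        ring
  -- conclude
  have hfin := key (n - 1) (by omega)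
  rw [show n - (n - 1) = 1 by omega] at hfin
  have hdeg1 : (P.coeff 1).degree = 1 := by
    have := congrArg Polynomial.degree hE0
    rwa [Polynomial.degree_mul, Polynomial.degree_C ha0, zero_add, Polynomial.degree_X] at this
  rw [hdeg1] at hfin
  have : (n - 1) * (d + 1) = 1 := by exact_mod_cast hfin.symm
  have h2 : d + 1 ∣ 1 := Dvd.intro_left _ this
  have := Nat.le_of_dvd one_pos h2
  omega
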